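/- arXiv:1504.00834 — 2 statements merged into one kernel-verified Lean document; each statement's English description precedes it below -/
import Mathlib

section
/- There exist positive constants α ≤ 1 and γ ≤ 1 such that for every h there is a 0-1 matrix M (not necessarily Toeplitz) of height h and width α·h·log₂ h such that the Shannon entropy of Mv is at least γ·h·log₂ h, where v is a uniformly random 0-1 column vector of length α·h·log₂ h. -/
/-- Shannon entropy (in bits) of the output of `f` when its input is uniform on `α`. -/
noncomputable def uniformEntropy {α β : Type*} [Fintype α] [DecidableEq β] (f : α → β) : ℝ :=
  - ∑ y ∈ Finset.univ.image f,
      (((Finset.univ.filter fun a => f a = y).card : ℝ) / (Fintype.card α)) *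
        Real.logb 2 (((Finset.univ.filter fun a => f a = y).card : ℝ) / (Fintype.card α))

namespace Stmt7Aux

open Finset

lemma fin2_cases (a : Fin 2) : a = 0 ∨ a = 1 := by
  rcases a with ⟨a, ha⟩; interval_cases a <;> simp

lemma fin3_cases (a : Fin 3) : a = 0 ∨ a = 1 ∨ a = 2 := by
  rcases a with ⟨a, ha⟩; interval_cases a <;> simp

lemma fin2_eq_of_iff {a b : Fin 2} (h : a = 1 ↔ b = 1) : a = b := by
  rcases fin2_cases a with ha | ha <;> rcases fin2_cases b with hb | hb <;>
    subst ha <;> subst hb <;> first | rfl | (exfalso; revert h; decide)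

lemma fin2_eq_of_iff0 {a b : Fin 2} (h : a = 0 ↔ b = 0) : a = b := by
  rcases fin2_cases a with ha | ha <;> rcases fin2_cases b with hb | hb <;>
    subst ha <;> subst hb <;> first | rfl | (exfalso; revert h; decide)

lemma fin2_val_ite (a : Fin 2) : ((a : ℕ) : ℤ) = if a = 1 then 1 else 0 := by
  rcases fin2_cases a with h | h <;> subst h <;> decide

lemma choose_step (n : ℕ) : (n+1) * ((2*n+1).choose n) = (2*n+1) * ((2*n).choose n) := by
  have h1 := Nat.add_one_mul_choose_eq (2*n) n
  have hsym : (2*n+1).choose (n+1) = (2*n+1).choose n := by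
    have := Nat.choose_symm (n := 2*n+1) (k := n+1) (by omega)
    simpa [show 2*n+1-(n+1) = n by omega] using this.symm
  rw [hsym] at h1
  rw [mul_comm]
  exact h1.symm

lemma choose_step2 (n : ℕ) : (n+1) * ((2*n+2).choose (n+1)) = (2*n+2) * ((2*n+1).choose n) := by
  have h2 := Nat.add_one_mul_choose_eq (2*n+1) n
  rw [mul_comm]
  simpa using h2.symm

lemma central_even (n : ℕ) : ((2*n).choose n)^2 * (2*n+1) ≤ 16^n := by
  induction n with
  | zero => simp
  | succ n ih =>
    have hE : 2*(n+1) = 2*n+2 := by ring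
    rw [hE]
    set c := (2*n).choose n with hc
    set e := (2*n+2).choose (n+1) with he'
    have key : (n+1)^2 * e = (2*n+1) * ((2*n+2) * c) := by
      calc (n+1)^2 * e = (n+1) * ((n+1) * e) := by ring
        _ = (n+1) * ((2*n+2)*((2*n+1).choose n)) := by rw [choose_step2]
        _ = (2*n+2) * ((n+1) * ((2*n+1).choose n)) := by ring
        _ = (2*n+2) * ((2*n+1)*c) := by rw [choose_step]
        _ = (2*n+1)*((2*n+2)*c) := by ring
    have expand : (n+1)^4 * (e^2*(2*n+2+1)) ≤ (n+1)^4 * 16^(n+1) := by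
      have l1 : (n+1)^4 * (e^2*(2*n+2+1)) = ((n+1)^2*e)^2 * (2*n+3) := by ring
      rw [l1, key]
      have l2 : ((2*n+1) * ((2*n+2) * c))^2 * (2*n+3)
          = ((2*n+1)*(2*n+2)^2*(2*n+3)) * (c^2*(2*n+1)) := by ring
      rw [l2]
      calc ((2*n+1)*(2*n+2)^2*(2*n+3)) * (c^2*(2*n+1))
          ≤ ((2*n+1)*(2*n+2)^2*(2*n+3)) * 16^n := Nat.mul_le_mul_left _ ih
        _ ≤ ((2*n+2)^4) * 16^n := by
            apply Nat.mul_le_mul_right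
            nlinarith
        _ = (n+1)^4 * 16^(n+1) := by ring
    exact Nat.le_of_mul_le_mul_left expand (by positivity)

lemma central_odd (n : ℕ) : ((2*n+1).choose n)^2 * (2*n+2) ≤ 4^(2*n+1) := by
  set c := (2*n).choose n with hc
  set d := (2*n+1).choose n with hd
  have expand : (n+1)^2 * (d^2*(2*n+2)) ≤ (n+1)^2 * 4^(2*n+1) := by
    have l1 : (n+1)^2 * (d^2*(2*n+2)) = ((n+1)*d)^2 * (2*n+2) := by ring
    rw [l1, choose_step]
    have l2 : ((2*n+1)*c)^2*(2*n+2) = ((2*n+1)*(2*n+2)) * (c^2*(2*n+1)) := by ring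
    rw [l2]
    calc ((2*n+1)*(2*n+2)) * (c^2*(2*n+1)) ≤ ((2*n+1)*(2*n+2)) * 16^n :=
          Nat.mul_le_mul_left _ (central_even n)
      _ ≤ (4*(n+1)^2) * 16^n := Nat.mul_le_mul_right _ (by nlinarith)
      _ = (n+1)^2 * 4^(2*n+1) := by
          rw [show (16:ℕ) = 4^2 by norm_num, ← pow_mul, pow_succ]
          ring
  exact Nat.le_of_mul_le_mul_left expand (by positivity)

lemma central (k q : ℕ) : (k.choose q)^2 * (k+1) ≤ 4^k := by
  have h := Nat.choose_le_middle q k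
  have h2 : (k.choose q)^2*(k+1) ≤ (k.choose (k/2))^2*(k+1) :=
    Nat.mul_le_mul_right _ (Nat.pow_le_pow_left h 2)
  refine h2.trans ?_
  rcases Nat.even_or_odd k with ⟨a, ha⟩ | ⟨a, ha⟩
  · subst ha
    rw [show a+a = 2*a by ring, show 2*a/2 = a by omega]
    calc ((2*a).choose a)^2*(2*a+1) ≤ 16^a := central_even a
      _ = 4^(2*a) := by rw [show (16:ℕ) = 4^2 by norm_num, ← pow_mul]
  · subst ha
    rw [show (2*a+1)/2 = a by omega]
    calc ((2*a+1).choose a)^2*(2*a+1+1) = ((2*a+1).choose a)^2*(2*a+2) := by ring_nf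
      _ ≤ 4^(2*a+1) := central_odd a

def xv {m : ℕ} (t : Fin m → Fin 3) : Fin m → ℤ :=
  fun j => if t j = 1 then 1 else if t j = 2 then -1 else 0

def Rset {m : ℕ} (t : Fin m → Fin 3) : Finset (Fin m → Fin 2) :=
  univ.filter fun r => (∑ j, ((r j : ℕ) : ℤ) * xv t j) = 0

def phi {h m : ℕ} (A : Fin h → Fin m → Fin 2) (v : Fin m → Fin 2) : Fin h → ℤ :=
  fun i => ∑ j, ((A i j : ℕ) : ℤ) * ((v j : ℕ) : ℤ)

def Bset (h : ℕ) {m : ℕ} (t : Fin m → Fin 3) : Finset (Fin h → Fin m → Fin 2) :=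
  univ.filter fun A => ∀ i, (∑ j, ((A i j : ℕ) : ℤ) * xv t j) = 0

lemma card_rows {h m : ℕ} (P : (Fin m → Fin 2) → Prop) [DecidablePred P] :
    (univ.filter fun A : Fin h → Fin m → Fin 2 => ∀ i, P (A i)).card
      = ((univ.filter fun r : Fin m → Fin 2 => P r).card)^h := by
  rw [← Fintype.card_subtype, ← Fintype.card_subtype]
  rw [Fintype.card_congr (Equiv.subtypePiEquivPi (p := fun _ x => P x))]
  simp [Fintype.card_pi]

lemma Bset_card {h m : ℕ} (t : Fin m → Fin 3) :
    (Bset h t).card = ((Rset t).card)^h := by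
  rw [Bset, Rset, card_rows (P := fun r => (∑ j, ((r j : ℕ) : ℤ) * xv t j) = 0)]

lemma card_supported {m : ℕ} {β : Type*} [DecidableEq β] [Fintype β] (z : β) (S : Finset (Fin m)) :
    (univ.filter fun f : Fin m → β => ∀ j ∉ S, f j = z).card = (Fintype.card β)^(S.card) := by
  rw [← Fintype.card_subtype]
  have e : {f : Fin m → β // ∀ j ∉ S, f j = z} ≃ ({j // j ∈ S} → β) :=
    { toFun := fun f j => f.1 j.1
      invFun := fun g => ⟨fun j => if h : j ∈ S then g ⟨j, h⟩ else z, fun j hj => by simp [hj]⟩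
      left_inv := fun f => Subtype.ext (funext fun j => by
        by_cases h : j ∈ S
        · simp [h]
        · simp [h, (f.2 j h).symm])
      right_inv := fun g => by ext j; simp [j.2] }
  rw [Fintype.card_congr e, Fintype.card_fun, Fintype.card_coe]

lemma flip_bound {m : ℕ} (t : Fin m → Fin 3) (j₀ : Fin m) (hx : t j₀ ≠ 0) :
    2 * (Rset t).card ≤ 2^m := by
  classical
  set x := xv t with hxv
  have hxj : x j₀ ≠ 0 := by
    rcases fin3_cases (t j₀) with h | h | h
    · exact absurd h hx
    · simp [hxv, xv, h]
    · simp [hxv, xv, h]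
  set σ : (Fin m → Fin 2) → (Fin m → Fin 2) := fun r => Function.update r j₀ (r j₀ + 1) with hσ
  have hinj : Function.Injective σ := by
    have hinv : Function.Involutive σ := by
      intro r
      funext j
      by_cases h : j = j₀
      · subst h
        simp [hσ, Function.update_self]
        rcases fin2_cases (r j) with h2 | h2 <;> rw [h2] <;> decide
      · simp [hσ, Function.update_of_ne h]
    exact hinv.injective
  have himg : (Rset t).image σ ⊆ univ \ Rset t := by
    intro s hs
    simp only [mem_image] at hs
    obtain ⟨r, hr, hrs⟩ := hs
    simp only [Rset, mem_filter, mem_univ, true_and] at hr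
    rw [mem_sdiff]
    refine ⟨mem_univ _, ?_⟩
    simp only [Rset, mem_filter, mem_univ, true_and]
    intro habs
    subst hrs
    have hdiff : (∑ j, ((σ r j : ℕ) : ℤ) * x j) - (∑ j, ((r j : ℕ) : ℤ) * x j)
        = (((σ r j₀ : ℕ) : ℤ) - ((r j₀ : ℕ) : ℤ)) * x j₀ := by
      rw [← Finset.sum_sub_distrib]
      rw [Finset.sum_eq_single j₀]
      · ring
      · intro j _ hj
        simp [hσ, Function.update_of_ne hj]
      · simp
    rw [habs, hr, sub_zero] at hdiff
    have hne : (((σ r j₀ : ℕ) : ℤ) - ((r j₀ : ℕ) : ℤ)) ≠ 0 := by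
      have : σ r j₀ = r j₀ + 1 := by simp [hσ]
      rw [this]
      rcases fin2_cases (r j₀) with h2 | h2 <;> rw [h2] <;> decide
    exact absurd hdiff (by
      intro h0
      rcases mul_eq_zero.mp h0.symm with h | h
      · exact hne h
      · exact hxj h)
  have hcard : (Rset t).card + ((Rset t).image σ).card ≤ 2^m := by
    have hdisj : Disjoint (Rset t) ((Rset t).image σ) := by
      refine Finset.disjoint_left.mpr ?_
      intro a ha hb
      have := himg hb
      rw [mem_sdiff] at this
      exact this.2 ha
    calc (Rset t).card + ((Rset t).image σ).card = ((Rset t) ∪ (Rset t).image σ).card :=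
          (Finset.card_union_of_disjoint hdisj).symm
      _ ≤ (univ : Finset (Fin m → Fin 2)).card := Finset.card_le_card (Finset.subset_univ _)
      _ = 2^m := by simp [Finset.card_univ]
  rwa [Finset.card_image_of_injective _ hinj, ← two_mul] at hcard

lemma balance {m : ℕ} (t : Fin m → Fin 3) (r : Fin m → Fin 2) (hr : r ∈ Rset t) :
    ((univ.filter fun j => t j = 1).filter fun j => r j = 1).card
      = ((univ.filter fun j => t j = 2).filter fun j => r j = 1).card := by
  have hsum : (∑ j, ((r j : ℕ) : ℤ) * xv t j) = 0 := by
    simpa [Rset] using hr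
  set f : Fin m → ℤ := fun j => ((r j : ℕ) : ℤ) * xv t j with hf
  have h1 := Finset.sum_filter_add_sum_filter_not univ (fun j => t j = 1) f
  have h2 := Finset.sum_filter_add_sum_filter_not
    (univ.filter fun j => ¬ t j = 1) (fun j => t j = 2) f
  have hN : (univ.filter fun j => ¬ t j = 1).filter (fun j => t j = 2)
      = univ.filter fun j => t j = 2 := by
    ext j
    simp only [mem_filter, mem_univ, true_and]
    constructor
    · rintro ⟨-, h⟩; exact h
    · intro h; exact ⟨by rw [h]; decide, h⟩
  have hzero : ∑ j ∈ (univ.filter fun j => ¬ t j = 1).filter (fun j => ¬ t j = 2), f j = 0 := by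
    apply Finset.sum_eq_zero
    intro j hj
    simp only [mem_filter, mem_univ, true_and] at hj
    have : t j = 0 := by
      rcases fin3_cases (t j) with h | h | h
      · exact h
      · exact absurd h hj.1
      · exact absurd h hj.2
    simp [hf, xv, this]
  have hP : ∑ j ∈ univ.filter (fun j => t j = 1), f j
      = ((univ.filter fun j => t j = 1).filter fun j => r j = 1).card := by
    have hterm : ∀ j ∈ univ.filter (fun j => t j = 1), f j = if r j = 1 then 1 else 0 := by
      intro j hj
      simp only [mem_filter, mem_univ, true_and] at hj
      have hfj : f j = ((r j : ℕ) : ℤ) * xv t j := rfl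
      have hx : xv t j = 1 := by simp [xv, hj]
      rw [hfj, hx, mul_one, fin2_val_ite]
    rw [Finset.sum_congr rfl hterm, Finset.sum_boole]
  have hNs : ∑ j ∈ univ.filter (fun j => t j = 2), f j
      = -(((univ.filter fun j => t j = 2).filter fun j => r j = 1).card : ℤ) := by
    have : ∀ j ∈ univ.filter (fun j => t j = 2), f j = -(if r j = 1 then 1 else 0) := by
      intro j hj
      simp only [mem_filter, mem_univ, true_and] at hj
      have hfj : f j = ((r j : ℕ) : ℤ) * xv t j := rfl
      have hx : xv t j = -1 := by
        simp only [xv, hj]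
        rw [if_neg (by decide)]
        simp
      rw [hfj, hx, fin2_val_ite]
      ring
    rw [Finset.sum_congr rfl this, Finset.sum_neg_distrib, Finset.sum_boole]
  have : (((univ.filter fun j => t j = 1).filter fun j => r j = 1).card : ℤ)
      - ((univ.filter fun j => t j = 2).filter fun j => r j = 1).card = 0 := by
    rw [hN] at h2
    rw [← h1, ← h2, hzero] at hsum
    rw [hP, hNs] at hsum
    linarith
  omega

lemma R_card_le {m : ℕ} (t : Fin m → Fin 3) :
    (Rset t).card ≤ (((univ.filter fun j => t j ≠ 0).card).choose
        ((univ.filter fun j => t j = 2).card))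
      * 2^(m - (univ.filter fun j => t j ≠ 0).card) := by
  classical
  set P := univ.filter (fun j : Fin m => t j = 1) with hP
  set N := univ.filter (fun j : Fin m => t j = 2) with hNdef
  set supp := univ.filter (fun j : Fin m => t j ≠ 0) with hsuppdef
  have hPN : Disjoint P N := by
    rw [Finset.disjoint_left]
    intro a ha hb
    simp only [hP, hNdef, mem_filter] at ha hb
    rw [ha.2] at hb
    exact absurd hb.2 (by decide)
  have hsupp : supp = P ∪ N := by
    ext j
    simp only [hsuppdef, hP, hNdef, mem_filter, mem_union, mem_univ, true_and]
    constructor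
    · intro h
      rcases fin3_cases (t j) with h0 | h0 | h0
      · exact absurd h0 h
      · exact Or.inl h0
      · exact Or.inr h0
    · rintro (h0 | h0) <;> rw [h0] <;> decide
  have hk : supp.card = P.card + N.card := by
    rw [hsupp, Finset.card_union_of_disjoint hPN]
  -- the injection
  have hcard := Finset.card_le_card_of_injOn
    (f := fun r : Fin m → Fin 2 =>
      ((P.filter fun j => r j = 1) ∪ (N.filter fun j => r j = 0),
        suppᶜ.filter fun j => r j = 1))
    (s := Rset t)
    (t := (Finset.powersetCard N.card supp) ×ˢ suppᶜ.powerset)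
    (by
      intro r hr
      rw [Finset.mem_coe, Finset.mem_product]
      constructor
      · rw [Finset.mem_powersetCard]
        constructor
        · rw [hsupp]
          exact Finset.union_subset_union (Finset.filter_subset _ _) (Finset.filter_subset _ _)
        · rw [Finset.card_union_of_disjoint
            (Finset.disjoint_filter_filter hPN)]
          have hbal := balance t r hr
          have hsplit := Finset.card_filter_add_card_filter_not
            (s := N) (p := fun j => r j = 1)
          have : N.filter (fun j => ¬ r j = 1) = N.filter (fun j => r j = 0) := by
            apply Finset.filter_congr
            intro j _
            constructor
            · intro h; rcases fin2_cases (r j) with h2 | h2; exact h2; exact absurd h2 h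
            · intro h; rw [h]; decide
          rw [this] at hsplit
          rw [← hP, ← hNdef] at hbal
          omega
      · rw [Finset.mem_powerset]
        exact Finset.filter_subset _ _)
    (by
      intro r1 hr1 r2 hr2 heq
      simp only [Prod.mk.injEq] at heq
      obtain ⟨hS, hW⟩ := heq
      funext j
      rcases fin3_cases (t j) with h0 | h0 | h0
      · -- j ∉ supp
        have hjc : j ∈ suppᶜ := by
          simp [hsuppdef, h0]
        apply fin2_eq_of_iff
        constructor
        · intro h
          have : j ∈ suppᶜ.filter fun j => r2 j = 1 := by rw [← hW]; exact mem_filter.mpr ⟨hjc, h⟩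
          exact (mem_filter.mp this).2
        · intro h
          have : j ∈ suppᶜ.filter fun j => r1 j = 1 := by rw [hW]; exact mem_filter.mpr ⟨hjc, h⟩
          exact (mem_filter.mp this).2
      · -- j ∈ P
        have hjP : j ∈ P := by simp [hP, h0]
        have hjN : j ∉ N := by simp [hNdef]; rw [h0]; decide
        have hiff : ∀ r : Fin m → Fin 2,
            (j ∈ (P.filter fun j => r j = 1) ∪ (N.filter fun j => r j = 0)) ↔ r j = 1 := by
          intro r
          rw [Finset.mem_union]
          constructor
          · rintro (h | h)
            · exact (mem_filter.mp h).2
            · exact absurd (mem_filter.mp h).1 hjN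
          · intro h; exact Or.inl (mem_filter.mpr ⟨hjP, h⟩)
        apply fin2_eq_of_iff
        rw [← hiff r1, ← hiff r2, hS]
      · -- j ∈ N
        have hjN : j ∈ N := by simp [hNdef, h0]
        have hjP : j ∉ P := by simp [hP]; rw [h0]; decide
        have hiff : ∀ r : Fin m → Fin 2,
            (j ∈ (P.filter fun j => r j = 1) ∪ (N.filter fun j => r j = 0)) ↔ r j = 0 := by
          intro r
          rw [Finset.mem_union]
          constructor
          · rintro (h | h)
            · exact absurd (mem_filter.mp h).1 hjP
            · exact (mem_filter.mp h).2
          · intro h; exact Or.inr (mem_filter.mpr ⟨hjN, h⟩)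
        apply fin2_eq_of_iff0
        rw [← hiff r1, ← hiff r2, hS])
  rw [Finset.card_product, Finset.card_powersetCard, Finset.card_powerset,
    Finset.card_compl] at hcard
  simpa [Fintype.card_fin] using hcard

lemma R_sq {m : ℕ} (t : Fin m → Fin 3) :
    ((Rset t).card)^2 * ((univ.filter fun j => t j ≠ 0).card + 1) ≤ 4^m := by
  set k := (univ.filter fun j => t j ≠ 0).card with hk
  set q := (univ.filter fun j => t j = 2).card with hq
  have hkm : k ≤ m := by
    rw [hk]
    exact (Finset.card_filter_le _ _).trans (by simp [Finset.card_univ])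
  have h1 := R_card_le t
  rw [← hk, ← hq] at h1
  calc ((Rset t).card)^2 * (k+1) ≤ (k.choose q * 2^(m-k))^2 * (k+1) :=
        Nat.mul_le_mul_right _ (Nat.pow_le_pow_left h1 2)
    _ = ((k.choose q)^2 * (k+1)) * (2^(m-k))^2 := by ring
    _ ≤ 4^k * (2^(m-k))^2 := Nat.mul_le_mul_right _ (central k q)
    _ = 4^k * 4^(m-k) := by
        rw [show (4:ℕ) = 2^2 by norm_num]
        rw [← pow_mul, ← pow_mul, ← pow_mul]
        ring_nf
    _ = 4^m := by rw [← pow_add]; congr 1; omega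

lemma bad_subset {h m : ℕ} :
    (univ.filter fun A : Fin h → Fin m → Fin 2 => ¬ Function.Injective (phi A))
      ⊆ ((univ : Finset (Fin m → Fin 3)).filter fun t => t ≠ fun _ => 0).biUnion
          (fun t => Bset h t) := by
  intro A hA
  rw [mem_filter] at hA
  simp only [mem_filter, mem_univ, true_and, Function.Injective] at hA
  push_neg at hA
  obtain ⟨u, v, heq, hne⟩ := hA
  set t : Fin m → Fin 3 := fun j => if u j = v j then 0 else if u j = 1 then 1 else 2 with ht
  have hxv : ∀ j, xv t j = ((u j : ℕ) : ℤ) - ((v j : ℕ) : ℤ) := by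
    intro j
    rcases fin2_cases (u j) with hu | hu <;> rcases fin2_cases (v j) with hv | hv <;>
      simp [xv, ht, hu, hv]
  rw [Finset.mem_biUnion]
  refine ⟨t, ?_, ?_⟩
  · simp only [mem_filter, mem_univ, true_and]
    intro h0
    apply hne
    funext j
    have : t j = 0 := congrFun h0 j
    by_contra hj
    simp only [ht] at this
    rw [if_neg hj] at this
    rcases fin2_cases (u j) with hu | hu
    · rw [if_neg (by rw [hu]; decide)] at this
      exact absurd this (by decide)
    · rw [if_pos hu] at this
      exact absurd this (by decide)
  · simp only [Bset, mem_filter, mem_univ, true_and]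
    intro i
    have : ∑ j, ((A i j : ℕ) : ℤ) * xv t j
        = (∑ j, ((A i j : ℕ) : ℤ) * ((u j : ℕ) : ℤ)) - ∑ j, ((A i j : ℕ) : ℤ) * ((v j : ℕ) : ℤ) := by
      rw [← Finset.sum_sub_distrib]
      apply Finset.sum_congr rfl
      intro j _
      rw [hxv j]
      ring
    rw [this]
    have := congrFun heq i
    simp only [phi] at this
    rw [this, sub_self]

lemma T1_card {m K : ℕ} (hK : K ≤ m) :
    (((univ : Finset (Fin m → Fin 3))).filter
        (fun t => (univ.filter fun j => t j ≠ 0).card ≤ K)).card ≤ m.choose K * 3^K := by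
  classical
  have hsub : ((univ : Finset (Fin m → Fin 3))).filter
        (fun t => (univ.filter fun j => t j ≠ 0).card ≤ K)
      ⊆ (Finset.powersetCard K (univ : Finset (Fin m))).biUnion
          (fun S => univ.filter fun t : Fin m → Fin 3 => ∀ j ∉ S, t j = 0) := by
    intro t ht
    simp only [mem_filter, mem_univ, true_and] at ht
    obtain ⟨S, hSsub, hScard⟩ := Finset.exists_superset_card_eq ht (by simpa using hK)
    rw [Finset.mem_biUnion]
    refine ⟨S, ?_, ?_⟩
    · rw [Finset.mem_powersetCard]
      exact ⟨Finset.subset_univ _, hScard⟩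
    · simp only [mem_filter, mem_univ, true_and]
      intro j hj
      by_contra hj0
      exact hj (hSsub (mem_filter.mpr ⟨mem_univ _, hj0⟩))
  refine (Finset.card_le_card hsub).trans ?_
  refine (Finset.card_biUnion_le).trans ?_
  have : ∀ S ∈ Finset.powersetCard K (univ : Finset (Fin m)),
      (univ.filter fun t : Fin m → Fin 3 => ∀ j ∉ S, t j = 0).card = 3^K := by
    intro S hS
    rw [card_supported]
    rw [(Finset.mem_powersetCard.mp hS).2]
    simp
  rw [Finset.sum_congr rfl this, Finset.sum_const, Finset.card_powersetCard]
  simp [Finset.card_univ]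

lemma exists_good (h m K : ℕ) (hKm : K ≤ m)
    (H1 : 4 * (m.choose K * 3^K) ≤ 2^h)
    (H2 : 4 * 9^m ≤ (K+2)^h) :
    ∃ A : Fin h → Fin m → Fin 2, Function.Injective (phi A) := by
  classical
  by_contra hc
  push_neg at hc
  have hBadeq : (univ.filter fun A : Fin h → Fin m → Fin 2 => ¬ Function.Injective (phi A))
      = univ := Finset.filter_true_of_mem (fun A _ => hc A)
  have hcuniv : (univ : Finset (Fin h → Fin m → Fin 2)).card = 2^(m*h) := by
    rw [Finset.card_univ, Fintype.card_fun, Fintype.card_fun, Fintype.card_fin,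
      Fintype.card_fin, ← pow_mul, Fintype.card_fin]
  set T := ((univ : Finset (Fin m → Fin 3)).filter fun t => t ≠ fun _ => 0) with hT
  have hsum : (2^(m*h) : ℕ) ≤ ∑ t ∈ T, (Bset h t).card := by
    calc (2^(m*h) : ℕ)
        = (univ.filter fun A : Fin h → Fin m → Fin 2 => ¬ Function.Injective (phi A)).card := by
          rw [hBadeq, hcuniv]
      _ ≤ (T.biUnion fun t => Bset h t).card := Finset.card_le_card bad_subset
      _ ≤ ∑ t ∈ T, (Bset h t).card := Finset.card_biUnion_le
  set d : (Fin m → Fin 3) → ℕ := fun t => (univ.filter fun j => t j ≠ 0).card with hd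
  have hsplit := Finset.sum_filter_add_sum_filter_not T (fun t => d t ≤ K)
    (fun t => (Bset h t).card)
  set S1 := ∑ t ∈ T.filter (fun t => d t ≤ K), (Bset h t).card with hS1
  set S2 := ∑ t ∈ T.filter (fun t => ¬ d t ≤ K), (Bset h t).card with hS2
  -- claim 1
  have per1 : ∀ t ∈ T.filter (fun t => d t ≤ K), 2^h * (Bset h t).card ≤ 2^(m*h) := by
    intro t ht
    have htne : t ≠ fun _ => 0 := by
      have := (Finset.mem_filter.mp ht).1
      rw [hT] at this
      exact (Finset.mem_filter.mp this).2
    obtain ⟨j₀, hj₀⟩ := Function.ne_iff.mp htne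
    have hflip := flip_bound t j₀ hj₀
    rw [Bset_card]
    calc 2^h * ((Rset t).card)^h = (2 * (Rset t).card)^h := by rw [mul_pow]
      _ ≤ (2^m)^h := Nat.pow_le_pow_left hflip h
      _ = 2^(m*h) := by rw [← pow_mul]
  have claim1 : 4 * S1 ≤ 2^(m*h) := by
    have e1 : 2^h * S1 ≤ (m.choose K * 3^K) * 2^(m*h) := by
      rw [hS1, Finset.mul_sum]
      calc ∑ t ∈ T.filter (fun t => d t ≤ K), 2^h * (Bset h t).card
          ≤ ∑ _t ∈ T.filter (fun t => d t ≤ K), 2^(m*h) := Finset.sum_le_sum per1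
        _ = (T.filter (fun t => d t ≤ K)).card * 2^(m*h) := by rw [Finset.sum_const, smul_eq_mul]
        _ ≤ (m.choose K * 3^K) * 2^(m*h) := by
            apply Nat.mul_le_mul_right
            refine le_trans (Finset.card_le_card ?_) (T1_card hKm)
            intro t ht
            simp only [hT, Finset.mem_filter] at ht ⊢
            exact ⟨ht.1.1, ht.2⟩
    have e2 : 2^h * (4 * S1) ≤ 2^h * 2^(m*h) := by
      calc 2^h * (4 * S1) = 4 * (2^h * S1) := by ring
        _ ≤ 4 * ((m.choose K * 3^K) * 2^(m*h)) := Nat.mul_le_mul_left _ e1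
        _ = (4 * (m.choose K * 3^K)) * 2^(m*h) := by ring
        _ ≤ 2^h * 2^(m*h) := Nat.mul_le_mul_right _ H1
    exact Nat.le_of_mul_le_mul_left e2 (Nat.pow_pos (by norm_num))
  -- claim 2
  have per2 : ∀ t ∈ T.filter (fun t => ¬ d t ≤ K), (2 * 3^m) * (Bset h t).card ≤ 2^(m*h) := by
    intro t ht
    have hdt : K + 2 ≤ d t + 1 := by
      have := (Finset.mem_filter.mp ht).2
      omega
    have hsq : ((2 * 3^m) * (Bset h t).card)^2 ≤ (2^(m*h))^2 := by
      calc ((2 * 3^m) * (Bset h t).card)^2 = (4 * 9^m) * ((Bset h t).card)^2 := by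
            rw [mul_pow]
            congr 1
            rw [show (9:ℕ) = 3^2 by norm_num, ← pow_mul, mul_pow, show (4:ℕ) = 2^2 by norm_num,
              ← pow_mul]
            ring_nf
        _ ≤ (K+2)^h * ((Bset h t).card)^2 := Nat.mul_le_mul_right _ H2
        _ = ((K+2) * ((Rset t).card)^2)^h := by
            rw [Bset_card, mul_pow, ← pow_mul, ← pow_mul, mul_comm 2 h]
        _ ≤ (((Rset t).card)^2 * (d t + 1))^h := by
            apply Nat.pow_le_pow_left
            calc (K+2) * ((Rset t).card)^2 ≤ (d t + 1) * ((Rset t).card)^2 :=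
                  Nat.mul_le_mul_right _ hdt
              _ = ((Rset t).card)^2 * (d t + 1) := by ring
        _ ≤ (4^m)^h := Nat.pow_le_pow_left (R_sq t) h
        _ = (2^(m*h))^2 := by
            rw [show (4:ℕ) = 2^2 by norm_num, ← pow_mul, ← pow_mul, ← pow_mul]
            ring_nf
    exact (Nat.pow_le_pow_iff_left (by norm_num)).mp hsq
  have claim2 : 2 * S2 ≤ 2^(m*h) := by
    have e1 : (2 * 3^m) * S2 ≤ 3^m * 2^(m*h) := by
      rw [hS2, Finset.mul_sum]
      calc ∑ t ∈ T.filter (fun t => ¬ d t ≤ K), (2 * 3^m) * (Bset h t).card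
          ≤ ∑ _t ∈ T.filter (fun t => ¬ d t ≤ K), 2^(m*h) := Finset.sum_le_sum per2
        _ = (T.filter (fun t => ¬ d t ≤ K)).card * 2^(m*h) := by
            rw [Finset.sum_const, smul_eq_mul]
        _ ≤ 3^m * 2^(m*h) := by
            apply Nat.mul_le_mul_right
            calc (T.filter (fun t => ¬ d t ≤ K)).card
                ≤ (univ : Finset (Fin m → Fin 3)).card := Finset.card_le_card (by
                  intro t ht; exact Finset.mem_univ t)
              _ = 3^m := by rw [Finset.card_univ, Fintype.card_fun, Fintype.card_fin,
                    Fintype.card_fin]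
    have e2 : 3^m * (2 * S2) ≤ 3^m * 2^(m*h) := by
      calc 3^m * (2 * S2) = (2 * 3^m) * S2 := by ring
        _ ≤ 3^m * 2^(m*h) := e1
    exact Nat.le_of_mul_le_mul_left e2 (Nat.pow_pos (by norm_num))
  have hpos : 0 < 2^(m*h) := Nat.pow_pos (by norm_num)
  omega

lemma entropy_ge {n mm : ℕ} {β : Type*} [DecidableEq β]
    (f : (Fin n → Fin 2) → β) (g : β → (Fin mm → Fin 2)) (hmn : mm ≤ n)
    (hg : ∀ v, g (f v) = fun j => v (Fin.castLE hmn j)) :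
    (mm : ℝ) ≤ uniformEntropy f := by
  classical
  have hcard : (Fintype.card (Fin n → Fin 2) : ℝ) = 2^n := by
    rw [Fintype.card_fun, Fintype.card_fin, Fintype.card_fin]
    push_cast
    rfl
  set c : β → ℕ := fun y => (univ.filter fun a => f a = y).card with hc
  have hsumc : ∑ y ∈ univ.image f, (c y : ℝ) = 2^n := by
    rw [← Nat.cast_sum]
    rw [← Finset.card_eq_sum_card_image f univ]
    rw [Finset.card_univ, ← hcard]
  have hpos : ∀ y ∈ univ.image f, 1 ≤ c y := by
    intro y hy
    obtain ⟨a, _, ha⟩ := Finset.mem_image.mp hy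
    have : a ∈ univ.filter fun a => f a = y := mem_filter.mpr ⟨mem_univ _, ha⟩
    exact Finset.card_pos.mpr ⟨a, this⟩
  have hupper : ∀ y ∈ univ.image f, c y ≤ 2^(n - mm) := by
    intro y hy
    have hinj := Finset.card_le_card_of_injOn
      (s := univ.filter fun a => f a = y) (t := (univ : Finset (Fin (n-mm) → Fin 2)))
      (f := fun (v : Fin n → Fin 2) (j : Fin (n - mm)) => v ⟨mm + j.1, by omega⟩)
      (fun v _ => mem_univ _) ?_
    · refine hinj.trans ?_
      rw [Finset.card_univ, Fintype.card_fun, Fintype.card_fin, Fintype.card_fin]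
    · intro v1 hv1 v2 hv2 heq
      simp only [mem_coe, mem_filter] at hv1 hv2
      have h1 : (fun j => v1 (Fin.castLE hmn j)) = (fun j => v2 (Fin.castLE hmn j)) := by
        rw [← hg v1, ← hg v2, hv1.2, hv2.2]
      funext j
      by_cases hj : (j : ℕ) < mm
      · have := congrFun h1 ⟨j.1, hj⟩
        simpa [Fin.castLE, Fin.ext_iff] using this
      · have := congrFun heq ⟨j.1 - mm, by omega⟩
        simp only at this
        have hjeq : (⟨mm + (j.1 - mm), by omega⟩ : Fin n) = j := by
          apply Fin.ext; simp; omega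
        rwa [hjeq] at this
  rw [uniformEntropy, ← Finset.sum_neg_distrib]
  have hterm : ∀ y ∈ univ.image f,
      ((c y : ℝ)/2^n) * (mm : ℝ) ≤ -(((c y : ℝ)/(Fintype.card (Fin n → Fin 2))) *
        Real.logb 2 ((c y : ℝ)/(Fintype.card (Fin n → Fin 2)))) := by
    intro y hy
    rw [hcard]
    rw [← mul_neg]
    apply mul_le_mul_of_nonneg_left _ (by positivity)
    have hple : (c y : ℝ)/2^n ≤ ((2:ℝ)^mm)⁻¹ := by
      rw [div_le_iff₀ (by positivity)]
      rw [inv_mul_eq_div, le_div_iff₀ (by positivity)]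
      calc (c y : ℝ) * 2^mm ≤ (2:ℝ)^(n-mm) * 2^mm := by
            apply mul_le_mul_of_nonneg_right _ (by positivity)
            exact_mod_cast hupper y hy
        _ = 2^n := by rw [← pow_add]; congr 1; omega
    have hppos : (0:ℝ) < (c y : ℝ)/2^n := by
      apply div_pos _ (by positivity)
      exact_mod_cast hpos y hy
    have : Real.logb 2 ((c y : ℝ)/2^n) ≤ Real.logb 2 ((2:ℝ)^mm)⁻¹ :=
      Real.logb_le_logb_of_le (by norm_num) hppos hple
    rw [Real.logb_inv, Real.logb_pow, Real.logb_self_eq_one (by norm_num)] at this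
    linarith
  calc (mm : ℝ) = (∑ y ∈ univ.image f, (c y : ℝ)/2^n) * mm := by
        rw [← Finset.sum_div, hsumc]
        rw [div_self (by positivity), one_mul]
    _ = ∑ y ∈ univ.image f, ((c y : ℝ)/2^n) * mm := by rw [Finset.sum_mul]
    _ ≤ ∑ y ∈ univ.image f, -(((c y : ℝ)/(Fintype.card (Fin n → Fin 2))) *
          Real.logb 2 ((c y : ℝ)/(Fintype.card (Fin n → Fin 2)))) := Finset.sum_le_sum hterm

lemma core (hh w m : ℕ) (hmw : m ≤ w) (A : Fin hh → Fin m → Fin 2)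
    (hA : Function.Injective (phi A)) :
    ∃ M : Matrix (Fin hh) (Fin w) ℤ, (∀ i j, M i j = 0 ∨ M i j = 1) ∧
      (m : ℝ) ≤ uniformEntropy (fun v : Fin w → Fin 2 => M.mulVec fun j => ((v j : ℕ) : ℤ)) := by
  classical
  set M : Matrix (Fin hh) (Fin w) ℤ :=
    fun i j => if hj : (j : ℕ) < m then ((A i ⟨j, hj⟩ : ℕ) : ℤ) else 0 with hM
  refine ⟨M, ?_, ?_⟩
  · intro i j
    by_cases hj : (j : ℕ) < m
    · rcases fin2_cases (A i ⟨j, hj⟩) with h | h <;> simp [hM, hj, h]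
    · left; simp [hM, hj]
  · have hfeq : ∀ v : Fin w → Fin 2,
        (M.mulVec fun j => ((v j : ℕ) : ℤ)) = phi A (fun j => v (Fin.castLE hmw j)) := by
      intro v
      funext i
      rw [Matrix.mulVec]
      simp only [dotProduct]
      rw [phi]
      have hzero : ∀ j ∈ (univ : Finset (Fin w)), M i j * ((v j : ℕ) : ℤ) ≠ 0 → (j : ℕ) < m := by
        intro j _ hne
        by_contra hj
        apply hne
        simp [hM, hj]
      rw [← Finset.sum_filter_of_ne hzero]
      refine Finset.sum_bij' (fun (j : Fin w) (hj : j ∈ univ.filter fun j : Fin w => (j:ℕ) < m)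
          => (⟨j.1, (mem_filter.mp hj).2⟩ : Fin m))
        (fun (j : Fin m) _ => Fin.castLE hmw j) ?_ ?_ ?_ ?_ ?_
      · intro j hj; exact mem_univ _
      · intro j hj
        rw [mem_filter]
        exact ⟨mem_univ _, by simp [Fin.castLE]⟩
      · intro j hj; apply Fin.ext; simp [Fin.castLE]
      · intro j hj; apply Fin.ext; simp [Fin.castLE]
      · intro j hj
        have hjm : (j : ℕ) < m := (mem_filter.mp hj).2
        simp only [hM]
        rw [dif_pos hjm]
        have hcast : Fin.castLE hmw (⟨j.1, hjm⟩ : Fin m) = j := by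
          apply Fin.ext; simp [Fin.castLE]
        rw [hcast]
    have hgrec : ∀ v : Fin w → Fin 2,
        Function.invFun (phi A) ((fun v : Fin w → Fin 2 =>
            M.mulVec fun j => ((v j : ℕ) : ℤ)) v)
          = fun j => v (Fin.castLE hmw j) := by
      intro v
      simp only [hfeq v]
      exact Function.leftInverse_invFun hA _
    exact entropy_ge _ (Function.invFun (phi A)) hmw hgrec

lemma id_inj (hh : ℕ) :
    Function.Injective (phi (fun i j : Fin hh => if i = j then (1 : Fin 2) else 0)) := by
  have hval : ∀ (v : Fin hh → Fin 2) i,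
      phi (fun i j : Fin hh => if i = j then (1 : Fin 2) else 0) v i = ((v i : ℕ) : ℤ) := by
    intro v i
    rw [phi, Finset.sum_eq_single i]
    · simp
    · intro j _ hne
      rw [if_neg (fun h => hne h.symm)]
      simp
    · intro h; exact absurd (mem_univ i) h
  intro u v huv
  funext i
  have := congrFun huv i
  rw [hval u i, hval v i] at this
  have : (u i : ℕ) = (v i : ℕ) := by exact_mod_cast this
  exact Fin.val_injective this

lemma log_le_sqrt_sqrt {y : ℝ} (hy : 1 ≤ y) : Real.log y ≤ 4 * Real.sqrt (Real.sqrt y) := by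
  have h0 : (0:ℝ) ≤ y := by linarith
  have h1 : Real.log y = 4 * Real.log (Real.sqrt (Real.sqrt y)) := by
    rw [Real.log_sqrt (Real.sqrt_nonneg y), Real.log_sqrt h0]; ring
  have hpos : (0:ℝ) < Real.sqrt (Real.sqrt y) := by
    apply Real.sqrt_pos.mpr
    apply Real.sqrt_pos.mpr
    linarith
  have h2 := Real.log_le_sub_one_of_pos hpos
  linarith

lemma logb_le_sqrt_sqrt {y : ℝ} (hy : 1 ≤ y) : Real.logb 2 y ≤ 6 * Real.sqrt (Real.sqrt y) := by
  rw [Real.logb, div_le_iff₀ (Real.log_pos (by norm_num))]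
  have h1 := log_le_sqrt_sqrt hy
  have h2 := Real.log_two_gt_d9
  nlinarith [Real.sqrt_nonneg (Real.sqrt y)]

end Stmt7Aux

open Stmt7Aux
set_option maxHeartbeats 1000000

/-- Erdős–Spencer style: there exist constants `0 < α ≤ 1`, `0 < γ ≤ 1`
such that for every `h ≥ 2` there is a 0-1 matrix `M` of height `h` and width
`α·h·log₂ h` with `H(Mv) ≥ γ·h·log₂ h` for `v` uniform on `{0,1}^{α·h·log₂ h}`. -/
theorem stmt7 : ∃ α γ : ℝ, 0 < α ∧ α ≤ 1 ∧ 0 < γ ∧ γ ≤ 1 ∧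
    ∀ h : ℕ, 2 ≤ h →
      ∃ M : Matrix (Fin h) (Fin ⌊α * h * Real.logb 2 h⌋₊) ℤ,
        (∀ i j, M i j = 0 ∨ M i j = 1) ∧
        γ * h * Real.logb 2 h ≤
          uniformEntropy (fun v : Fin ⌊α * h * Real.logb 2 h⌋₊ → Fin 2 =>
            M.mulVec fun j => ((v j : ℕ) : ℤ)) := by
  refine ⟨1, 1/100, by norm_num, le_refl 1, by norm_num, by norm_num, ?_⟩
  intro h hh2
  set L := Real.logb 2 (h : ℝ) with hLdef
  have hh2r : (2:ℝ) ≤ (h:ℝ) := by exact_mod_cast hh2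
  have hhpos : (0:ℝ) < (h:ℝ) := by linarith
  have hL1 : 1 ≤ L := by
    rw [hLdef]
    refine (Real.le_logb_iff_rpow_le (by norm_num) hhpos).mpr ?_
    rw [Real.rpow_one]; exact hh2r
  have hfe : ⌊(1:ℝ) * (h:ℝ) * L⌋₊ = ⌊(h:ℝ) * L⌋₊ := by rw [one_mul]
  have hwge : h ≤ ⌊(1:ℝ) * (h:ℝ) * L⌋₊ := by
    rw [hfe]
    apply Nat.le_floor
    nlinarith
  by_cases hsl : L ≤ 100
  · -- small case: identity matrix
    obtain ⟨M, hM01, hMent⟩ :=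
      core h ⌊(1:ℝ)*(h:ℝ)*L⌋₊ h hwge _ (id_inj h)
    refine ⟨M, hM01, le_trans ?_ hMent⟩
    nlinarith
  · push_neg at hsl
    have hbig : (2:ℝ)^(100:ℕ) ≤ (h:ℝ) := by
      have := (Real.lt_logb_iff_rpow_lt (by norm_num) hhpos).mp hsl
      rw [show ((100:ℝ)) = ((100:ℕ):ℝ) by norm_num, Real.rpow_natCast] at this
      linarith
    set x := (h:ℝ) * L with hxdef
    have hxbig : (2:ℝ)^(100:ℕ) * 100 ≤ x := by
      rw [hxdef]; nlinarith
    have hx200 : (200:ℝ) ≤ x := by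
      nlinarith [show (2:ℝ) ≤ 2^(100:ℕ) by norm_num]
    have hxpos : (0:ℝ) ≤ x / 100 := by linarith
    set m := ⌈x/100⌉₊ with hmdef
    set K := Nat.sqrt h with hKdef
    have hmx : x/100 ≤ (m:ℝ) := Nat.le_ceil _
    have hmub : (m:ℝ) ≤ x/100 + 1 := le_of_lt (Nat.ceil_lt_add_one hxpos)
    have hhm : h ≤ m := by
      have : (h:ℝ) ≤ (m:ℝ) := by
        refine le_trans ?_ hmx
        rw [hxdef]
        nlinarith
      exact_mod_cast this
    have hKm : K ≤ m := le_trans (Nat.sqrt_le_self h) hhm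
    have hmw : m ≤ ⌊(1:ℝ)*(h:ℝ)*L⌋₊ := by
      rw [hfe]
      have hfl : x - 1 < (⌊x⌋₊:ℝ) := by
        have := Nat.lt_floor_add_one x
        linarith
      have : (m:ℝ) < (⌊x⌋₊:ℝ) := by nlinarith
      exact_mod_cast le_of_lt this
    -- analytic facts
    set t := Real.sqrt (Real.sqrt (h:ℝ)) with htdef
    have h1h : (1:ℝ) ≤ (h:ℝ) := by linarith
    have hsqh_le : Real.sqrt (h:ℝ) ≤ (h:ℝ) := by
      rw [show (h:ℝ) = Real.sqrt ((h:ℝ)^2) from (Real.sqrt_sq hhpos.le).symm]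
      nth_rewrite 1 [Real.sqrt_sq hhpos.le]
      exact Real.sqrt_le_sqrt (by nlinarith)
    have hsq1 : (1:ℝ) ≤ Real.sqrt (h:ℝ) := by
      rw [show (1:ℝ) = Real.sqrt 1 from (Real.sqrt_one).symm]
      exact Real.sqrt_le_sqrt h1h
    have ht1 : (1:ℝ) ≤ t := by
      rw [htdef, show (1:ℝ) = Real.sqrt 1 from (Real.sqrt_one).symm]
      exact Real.sqrt_le_sqrt hsq1
    have hth : t ≤ (h:ℝ) := by
      rw [htdef]
      calc Real.sqrt (Real.sqrt (h:ℝ)) ≤ Real.sqrt (h:ℝ) := by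
            rw [show Real.sqrt (h:ℝ) = Real.sqrt (Real.sqrt ((h:ℝ)^2)) from by
              rw [Real.sqrt_sq hhpos.le]]
            exact Real.sqrt_le_sqrt (by rw [Real.sqrt_sq hhpos.le]; exact hsqh_le)
        _ ≤ (h:ℝ) := hsqh_le
    have hLle : L ≤ 6 * t := by
      rw [hLdef, htdef]
      exact logb_le_sqrt_sqrt h1h
    have hLh : L ≤ 6 * (h:ℝ) := by nlinarith
    have hloghle : Real.log (h:ℝ) ≤ 4 * t := by
      rw [htdef]; exact log_le_sqrt_sqrt h1h
    have hlogh0 : (0:ℝ) ≤ Real.log (h:ℝ) := Real.log_nonneg h1h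
    have htsq : t^2 = Real.sqrt (h:ℝ) := by
      rw [htdef, Real.sq_sqrt (Real.sqrt_nonneg _)]
    have hht4 : (h:ℝ) = t^4 := by
      rw [show t^4 = (t^2)^2 by ring, htsq, Real.sq_sqrt hhpos.le]
    have hKt : (K:ℝ) ≤ t^2 := by
      rw [htsq, Real.le_sqrt (by positivity) (by positivity)]
      exact_mod_cast Nat.sqrt_le' h
    have ht25 : (2:ℝ)^(25:ℕ) ≤ t := by
      rw [htdef]
      have h50 : (2:ℝ)^(50:ℕ) ≤ Real.sqrt (h:ℝ) := by
        rw [Real.le_sqrt (by positivity) (by positivity)]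
        calc ((2:ℝ)^(50:ℕ))^2 = 2^(100:ℕ) := by rw [← pow_mul]
          _ ≤ (h:ℝ) := hbig
      rw [Real.le_sqrt (by positivity) (by positivity)]
      calc ((2:ℝ)^(25:ℕ))^2 = 2^(50:ℕ) := by rw [← pow_mul]
        _ ≤ Real.sqrt (h:ℝ) := h50
    have ht12 : (12:ℝ) ≤ t := by
      refine le_trans ?_ ht25
      norm_num
    -- H1
    have s2 : 3*m ≤ h^2 := by
      have hr : 3*(m:ℝ) ≤ (h:ℝ)^2 := by nlinarith
      exact_mod_cast (by push_cast; exact hr : ((3*m : ℕ):ℝ) ≤ ((h^2 : ℕ):ℝ))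
    have s4 : (4:ℕ) * (h^2)^K ≤ 2^h := by
      have hcast : ((4 * (h^2)^K : ℕ):ℝ) ≤ ((2^h : ℕ):ℝ) := by
        push_cast
        rw [← pow_mul]
        have lhspos : (0:ℝ) < 4*(h:ℝ)^(2*K) := by positivity
        rw [← Real.log_le_log_iff lhspos (by positivity)]
        rw [Real.log_mul (by norm_num) (by positivity), Real.log_pow, Real.log_pow]
        have hlog4 : Real.log 4 ≤ 1.4 := by
          rw [show (4:ℝ) = 2^2 by norm_num, Real.log_pow]
          have := Real.log_two_lt_d9
          push_cast
          linarith
        have hlog2 := Real.log_two_gt_d9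
        have hKlog : ((2*K : ℕ):ℝ) * Real.log (h:ℝ) ≤ 2 * (t^2 * (4*t)) := by
          push_cast
          have hkk : (K:ℝ) * Real.log (h:ℝ) ≤ t^2 * (4*t) :=
            mul_le_mul hKt hloghle hlogh0 (by positivity)
          linarith [hkk]
        have hcube : (12:ℝ)^3 ≤ t^3 :=
          pow_le_pow_left₀ (by norm_num) ht12 3
        have htt : 12 * t^3 ≤ t^4 := by
          calc 12 * t^3 ≤ t * t^3 := mul_le_mul_of_nonneg_right ht12 (by positivity)
            _ = t^4 := by ring
        calc Real.log 4 + ((2*K : ℕ):ℝ) * Real.log (h:ℝ)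
            ≤ 1.4 + 8 * t^3 := by push_cast at hKlog ⊢; linarith
          _ ≤ 0.69 * t^4 := by linarith
          _ ≤ (h:ℝ) * Real.log 2 := by
              rw [hht4]
              have h069 := mul_le_mul_of_nonneg_right
                (show (0.69:ℝ) ≤ Real.log 2 by linarith) (show (0:ℝ) ≤ t^4 by positivity)
              linarith
      exact_mod_cast hcast
    have H1 : 4 * (m.choose K * 3^K) ≤ 2^h := by
      calc 4 * (m.choose K * 3^K) ≤ 4 * (m^K * 3^K) := by
            apply Nat.mul_le_mul_left
            exact Nat.mul_le_mul_right _ (Nat.choose_le_pow _ _)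
        _ = 4 * (3*m)^K := by rw [mul_pow]; ring
        _ ≤ 4 * (h^2)^K := by
            apply Nat.mul_le_mul_left
            exact Nat.pow_le_pow_left s2 K
        _ ≤ 2^h := s4
    -- H2
    have u3 : (2:ℕ)^(7*m+4) ≤ h^h := by
      have hcast : (((2:ℕ)^(7*m+4) : ℕ):ℝ) ≤ ((h^h : ℕ):ℝ) := by
        push_cast
        rw [← Real.log_le_log_iff (by positivity) (by positivity)]
        rw [Real.log_pow, Real.log_pow]
        have hlogh : Real.log (h:ℝ) = L * Real.log 2 := by
          rw [hLdef, Real.logb]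
          field_simp
        rw [hlogh]
        have hm74 : ((7*m+4 : ℕ):ℝ) ≤ x := by
          push_cast
          nlinarith
        have hlog2 := Real.log_two_gt_d9
        calc ((7*m+4 : ℕ):ℝ) * Real.log 2 ≤ x * Real.log 2 := by nlinarith
          _ = (h:ℝ) * (L * Real.log 2) := by rw [hxdef]; ring
      exact_mod_cast hcast
    have u4 : h^h ≤ ((K+2)^h)^2 := by
      have hle : h ≤ (K+2)^2 :=
        le_trans (Nat.le_of_lt (Nat.lt_succ_sqrt' h)) (Nat.pow_le_pow_left (by omega) 2)
      calc h^h ≤ ((K+2)^2)^h := Nat.pow_le_pow_left hle h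
        _ = ((K+2)^h)^2 := by rw [← pow_mul, ← pow_mul]; ring_nf
    have H2 : 4 * 9^m ≤ (K+2)^h := by
      have hsq : (4*9^m)^2 ≤ ((K+2)^h)^2 := by
        calc (4*9^m)^2 = 16*81^m := by
              rw [mul_pow, show ((9:ℕ)^m)^2 = (9^2)^m by rw [← pow_mul, ← pow_mul]; ring_nf]
              norm_num
          _ ≤ 16*128^m := Nat.mul_le_mul_left _ (Nat.pow_le_pow_left (by norm_num) m)
          _ = 2^(7*m+4) := by
              rw [show (128:ℕ) = 2^7 by norm_num, ← pow_mul, pow_add]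
              ring
          _ ≤ h^h := u3
          _ ≤ ((K+2)^h)^2 := u4
      exact (Nat.pow_le_pow_iff_left (by norm_num)).mp hsq
    obtain ⟨A, hA⟩ := exists_good h m K hKm H1 H2
    obtain ⟨M, hM01, hMent⟩ := core h ⌊(1:ℝ)*(h:ℝ)*L⌋₊ m hmw A hA
    refine ⟨M, hM01, le_trans ?_ hMent⟩
    calc 1/100 * (h:ℝ) * L = x/100 := by rw [hxdef]; ring
      _ ≤ (m:ℝ) := hmx
end

section
/- Optimal rearrangement structure: For binary strings S₁, S₂ of length n with equal numbers of ones, the permutation π minimizing Σ_j |j − π(j)|² subject to S₁[π(j)] = S₂[j] for all j is the one that maps the k-th one of S₂ (in left-to-right order) to the k-th one of S₁, and the k-th zero of S₂ to the k-th zero of S₁. -/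
/-- Cost of a rearrangement permutation: `Σ_j |j - π(j)|²`. -/
def L2cost (n : ℕ) (π : Equiv.Perm (Fin n)) : ℕ :=
  ∑ j : Fin n, (((j : ℤ) - ((π j : ℕ) : ℤ)).natAbs) ^ 2

namespace Stmt11

variable {n : ℕ}

/-- The set of same-class inversions of `π`. -/
def Inv (S₂ : Fin n → Fin 2) (π : Equiv.Perm (Fin n)) : Finset (Fin n × Fin n) :=
  Finset.univ.filter fun p => p.1 < p.2 ∧ S₂ p.1 = S₂ p.2 ∧ π p.2 < π p.1

lemma mem_Inv {S₂ : Fin n → Fin 2} {π : Equiv.Perm (Fin n)} {p : Fin n × Fin n} :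
    p ∈ Inv S₂ π ↔ p.1 < p.2 ∧ S₂ p.1 = S₂ p.2 ∧ π p.2 < π p.1 := by
  simp [Inv]

lemma sq_ineq (a b c d : ℤ) (hab : a ≤ b) (hdc : d ≤ c) :
    ((a - d).natAbs) ^ 2 + ((b - c).natAbs) ^ 2 ≤ ((a - c).natAbs) ^ 2 + ((b - d).natAbs) ^ 2 := by
  have h : (a - d) ^ 2 + (b - c) ^ 2 ≤ (a - c) ^ 2 + (b - d) ^ 2 := by nlinarith
  have e : ∀ x : ℤ, ((x.natAbs : ℤ)) ^ 2 = x ^ 2 := fun x => Int.natAbs_sq x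
  have : (((a - d).natAbs : ℤ)) ^ 2 + (((b - c).natAbs : ℤ)) ^ 2
      ≤ (((a - c).natAbs : ℤ)) ^ 2 + (((b - d).natAbs : ℤ)) ^ 2 := by
    rw [e, e, e, e]; exact h
  exact_mod_cast this

lemma card_rank (S₁ S₂ : Fin n → Fin 2) (π : Equiv.Perm (Fin n))
    (hπ : ∀ j, S₁ (π j) = S₂ j)
    (hm : ∀ j j', S₂ j = S₂ j' → j ≤ j' → π j ≤ π j') (j : Fin n) :
    (Finset.univ.filter fun i => S₁ i = S₂ j ∧ i ≤ π j).card
      = (Finset.univ.filter fun k => S₂ k = S₂ j ∧ k ≤ j).card := by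
  rw [← Finset.card_image_of_injective
    (Finset.univ.filter fun k => S₂ k = S₂ j ∧ k ≤ j) π.injective]
  congr 1
  ext i
  simp only [Finset.mem_image, Finset.mem_filter, Finset.mem_univ, true_and]
  constructor
  · rintro ⟨h1, h2⟩
    refine ⟨π.symm i, ⟨?_, ?_⟩, by simp⟩
    · have h3 := hπ (π.symm i)
      rw [Equiv.apply_symm_apply] at h3
      rw [← h3, h1]
    · by_contra hlt
      push_neg at hlt
      have hc : S₂ j = S₂ (π.symm i) := by
        have h3 := hπ (π.symm i)
        rw [Equiv.apply_symm_apply] at h3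
        rw [← h3, h1]
      have := hm j (π.symm i) hc hlt.le
      rw [Equiv.apply_symm_apply] at this
      have hi : i = π j := le_antisymm h2 this
      have : π.symm i = j := by rw [hi]; simp
      exact absurd this (ne_of_gt hlt)
  · rintro ⟨k, ⟨hk1, hk2⟩, rfl⟩
    exact ⟨by rw [hπ k, hk1], hm k j hk1 hk2⟩

lemma unique (S₁ S₂ : Fin n → Fin 2) (π σ : Equiv.Perm (Fin n))
    (hπ : ∀ j, S₁ (π j) = S₂ j) (hσ : ∀ j, S₁ (σ j) = S₂ j)
    (hπm : ∀ j j', S₂ j = S₂ j' → j ≤ j' → π j ≤ π j')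
    (hσm : ∀ j j', S₂ j = S₂ j' → j ≤ j' → σ j ≤ σ j') :
    π = σ := by
  ext j
  have h1 := card_rank S₁ S₂ π hπ hπm j
  have h2 := card_rank S₁ S₂ σ hσ hσm j
  have hcc : (Finset.univ.filter fun i => S₁ i = S₂ j ∧ i ≤ π j).card
      = (Finset.univ.filter fun i => S₁ i = S₂ j ∧ i ≤ σ j).card := by rw [h1, h2]
  by_contra hne
  have hne' : π j ≠ σ j := fun h => hne (by rw [h])
  rcases lt_or_gt_of_ne hne' with h | h
  · have hss : (Finset.univ.filter fun i => S₁ i = S₂ j ∧ i ≤ π j)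
        ⊂ (Finset.univ.filter fun i => S₁ i = S₂ j ∧ i ≤ σ j) := by
      constructor
      · intro i hi
        simp only [Finset.mem_filter, Finset.mem_univ, true_and] at hi ⊢
        exact ⟨hi.1, hi.2.trans h.le⟩
      · intro hsub
        have : σ j ∈ (Finset.univ.filter fun i => S₁ i = S₂ j ∧ i ≤ π j) := by
          apply hsub
          simp [hσ j]
        simp only [Finset.mem_filter, Finset.mem_univ, true_and] at this
        exact absurd this.2 (not_le.mpr h)
    exact absurd hcc (ne_of_lt (Finset.card_lt_card hss))
  · have hss : (Finset.univ.filter fun i => S₁ i = S₂ j ∧ i ≤ σ j)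
        ⊂ (Finset.univ.filter fun i => S₁ i = S₂ j ∧ i ≤ π j) := by
      constructor
      · intro i hi
        simp only [Finset.mem_filter, Finset.mem_univ, true_and] at hi ⊢
        exact ⟨hi.1, hi.2.trans h.le⟩
      · intro hsub
        have : π j ∈ (Finset.univ.filter fun i => S₁ i = S₂ j ∧ i ≤ σ j) := by
          apply hsub
          simp [hπ j]
        simp only [Finset.mem_filter, Finset.mem_univ, true_and] at this
        exact absurd this.2 (not_le.mpr h)
    exact absurd hcc.symm (ne_of_lt (Finset.card_lt_card hss))

lemma cost_swap (π : Equiv.Perm (Fin n)) {j j' : Fin n} (hjj : j < j') (hv : π j' < π j) :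
    L2cost n (π * Equiv.swap j j') ≤ L2cost n π := by
  classical
  have hne : j ≠ j' := ne_of_lt hjj
  have hmem : j' ∈ Finset.univ.erase j := Finset.mem_erase.mpr ⟨hne.symm, Finset.mem_univ j'⟩
  set g := fun (ρ : Equiv.Perm (Fin n)) (x : Fin n) =>
    (((x : ℤ) - ((ρ x : ℕ) : ℤ)).natAbs) ^ 2 with hg
  have split : ∀ ρ : Equiv.Perm (Fin n),
      L2cost n ρ = g ρ j + (g ρ j' + ∑ x ∈ (Finset.univ.erase j).erase j', g ρ x) := by
    intro ρ
    rw [L2cost, ← Finset.add_sum_erase _ _ (Finset.mem_univ j),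
      ← Finset.add_sum_erase _ _ hmem]
  rw [split, split]
  have hrest : ∑ x ∈ (Finset.univ.erase j).erase j', g (π * Equiv.swap j j') x
      = ∑ x ∈ (Finset.univ.erase j).erase j', g π x := by
    apply Finset.sum_congr rfl
    intro x hx
    simp only [Finset.mem_erase] at hx
    simp only [hg, Equiv.Perm.mul_apply, Equiv.swap_apply_of_ne_of_ne hx.2.1 hx.1]
  rw [hrest]
  have hj : (π * Equiv.swap j j') j = π j' := by simp
  have hj' : (π * Equiv.swap j j') j' = π j := by simp
  have hkey : g (π * Equiv.swap j j') j + g (π * Equiv.swap j j') j' ≤ g π j + g π j' := by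
    simp only [hg, hj, hj']
    exact sq_ineq (j : ℤ) (j' : ℤ) ((π j : ℕ) : ℤ) ((π j' : ℕ) : ℤ)
      (by exact_mod_cast hjj.le) (by exact_mod_cast hv.le)
  omega

lemma inv_swap_lt (S₂ : Fin n → Fin 2) (π : Equiv.Perm (Fin n)) {j j' : Fin n}
    (hjj : j < j') (hcls : S₂ j = S₂ j') (hv : π j' < π j)
    (hadj : ∀ k, j < k → k < j' → S₂ k ≠ S₂ j) :
    (Inv S₂ (π * Equiv.swap j j')).card < (Inv S₂ π).card := by
  classical
  set τ := Equiv.swap j j' with hτ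
  have hS2τ : ∀ x, S₂ (τ x) = S₂ x := by
    intro x
    rcases eq_or_ne x j with rfl | hxj
    · rw [hτ, Equiv.swap_apply_left]; exact hcls.symm
    · rcases eq_or_ne x j' with rfl | hxj'
      · rw [hτ, Equiv.swap_apply_right]; exact hcls
      · rw [hτ, Equiv.swap_apply_of_ne_of_ne hxj hxj']
  have hjmem : (j, j') ∈ Inv S₂ π := mem_Inv.mpr ⟨hjj, hcls, hv⟩
  have hle : (Inv S₂ (π * τ)).card ≤ ((Inv S₂ π).erase (j, j')).card := by
    apply Finset.card_le_card_of_injOn (fun p => (τ p.1, τ p.2))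
    · rintro ⟨a, b⟩ hp
      rw [Finset.mem_coe, mem_Inv] at hp
      obtain ⟨hab, hcab, hvab⟩ := hp
      simp only [Equiv.Perm.mul_apply] at hvab
      have hgoal2 : S₂ (τ a) = S₂ (τ b) := by rw [hS2τ, hS2τ]; exact hcab
      have hgoal1 : τ a < τ b := by
        by_cases haj : a = j
        · by_cases hbj' : b = j'
          · exfalso
            rw [haj, hbj', hτ, Equiv.swap_apply_left, Equiv.swap_apply_right] at hvab
            exact absurd hvab (not_lt.mpr hv.le)
          · have hbj : b ≠ j := by rw [← haj]; exact (ne_of_gt hab)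
            have hb : j' < b := by
              rcases lt_or_ge j' b with h | h
              · exact h
              · exfalso
                have hjb : j < b := haj ▸ hab
                have hbc : S₂ b = S₂ j := by rw [← haj]; exact hcab.symm
                exact hadj b hjb (lt_of_le_of_ne h hbj') hbc
            rw [haj, hτ, Equiv.swap_apply_left, Equiv.swap_apply_of_ne_of_ne hbj hbj']
            exact hb
        · by_cases haj' : a = j'
          · have hj'b : j' < b := haj' ▸ hab
            have hbj' : b ≠ j' := ne_of_gt hj'b
            have hbj : b ≠ j := ne_of_gt (hjj.trans hj'b)
            rw [haj', hτ, Equiv.swap_apply_right, Equiv.swap_apply_of_ne_of_ne hbj hbj']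
            exact hjj.trans hj'b
          · have hτa : τ a = a := Equiv.swap_apply_of_ne_of_ne haj haj'
            by_cases hbj : b = j
            · have haj2 : a < j := hbj ▸ hab
              rw [hbj, hτ]
              rw [hτ] at hτa
              rw [hτa, Equiv.swap_apply_left]
              exact haj2.trans hjj
            · by_cases hbj' : b = j'
              · have ha : a < j := by
                  rcases lt_or_ge a j with h | h
                  · exact h
                  · exfalso
                    have hac : S₂ a = S₂ j := by
                      rw [hcab, hbj']; exact hcls.symm
                    have hajb : a < j' := hbj' ▸ hab
                    exact hadj a (lt_of_le_of_ne h (Ne.symm haj)) hajb hac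
                rw [hbj', hτ, Equiv.swap_apply_right]
                rw [hτ] at hτa
                rw [hτa]
                exact ha
              · rw [hτ] at hτa
                rw [hτ, hτa, Equiv.swap_apply_of_ne_of_ne hbj hbj']
                exact hab
      apply Finset.mem_erase.mpr
      constructor
      · intro hcontra
        simp only [Prod.mk.injEq] at hcontra
        have ha : a = j' := by
          have : τ (τ a) = τ j := by rw [hcontra.1]
          rw [Equiv.swap_apply_self, hτ, Equiv.swap_apply_left] at this
          exact this
        have hb : b = j := by
          have : τ (τ b) = τ j' := by rw [hcontra.2]
          rw [Equiv.swap_apply_self, hτ, Equiv.swap_apply_right] at this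
          exact this
        rw [ha, hb] at hab
        exact absurd (hjj.trans hab) (lt_irrefl j)
      · exact mem_Inv.mpr ⟨hgoal1, hgoal2, hvab⟩
    · rintro ⟨a, b⟩ _ ⟨c, d⟩ _ h
      simp only [Prod.mk.injEq] at h
      exact Prod.ext (τ.injective h.1) (τ.injective h.2)
  calc (Inv S₂ (π * τ)).card ≤ ((Inv S₂ π).erase (j, j')).card := hle
    _ < (Inv S₂ π).card := Finset.card_erase_lt_of_mem hjmem

lemma key (S₁ S₂ : Fin n → Fin 2) (σ : Equiv.Perm (Fin n))
    (hσ : ∀ j, S₁ (σ j) = S₂ j)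
    (hmono : ∀ j j', S₂ j = S₂ j' → j ≤ j' → σ j ≤ σ j') :
    ∀ N (π : Equiv.Perm (Fin n)), (Inv S₂ π).card ≤ N → (∀ j, S₁ (π j) = S₂ j) →
      L2cost n σ ≤ L2cost n π := by
  intro N
  induction N with
  | zero =>
    intro π hN hπ
    have hempty : Inv S₂ π = ∅ := Finset.card_eq_zero.mp (Nat.le_zero.mp hN)
    have hπm : ∀ j j', S₂ j = S₂ j' → j ≤ j' → π j ≤ π j' := by
      intro j j' hc hle
      rcases eq_or_lt_of_le hle with rfl | hlt
      · exact le_rfl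
      · by_contra hgt
        push_neg at hgt
        have : (j, j') ∈ Inv S₂ π := mem_Inv.mpr ⟨hlt, hc, hgt⟩
        rw [hempty] at this
        exact absurd this (Finset.notMem_empty _)
    rw [unique S₁ S₂ π σ hπ hσ hπm hmono]
  | succ N ih =>
    intro π hN hπ
    by_cases h0 : (Inv S₂ π).card = 0
    · exact ih π (by omega) hπ
    · have hne : (Inv S₂ π).Nonempty := Finset.card_pos.mp (Nat.pos_of_ne_zero h0)
      obtain ⟨p, hp, hpmin⟩ := Finset.exists_min_image (Inv S₂ π)
        (fun p => p.2.val - p.1.val) hne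
      obtain ⟨j, j'⟩ := p
      rw [mem_Inv] at hp
      obtain ⟨hjj, hcls, hv⟩ := hp
      have hadj : ∀ k, j < k → k < j' → S₂ k ≠ S₂ j := by
        intro k hjk hkj' hSk
        rcases lt_or_ge (π k) (π j) with hk | hk
        · have hmem : ((j, k) : Fin n × Fin n) ∈ Inv S₂ π := mem_Inv.mpr ⟨hjk, hSk.symm, hk⟩
          have := hpmin _ hmem
          simp only at this
          have h1 : j.val < k.val := hjk
          have h2 : k.val < j'.val := hkj'
          omega
        · have hv' : π j' < π k := lt_of_lt_of_le hv hk
          have hmem : ((k, j') : Fin n × Fin n) ∈ Inv S₂ π :=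
            mem_Inv.mpr ⟨hkj', hSk.trans hcls, hv'⟩
          have := hpmin _ hmem
          simp only at this
          have h1 : j.val < k.val := hjk
          have h2 : k.val < j'.val := hkj'
          omega
      have hS2τ : ∀ x, S₂ (Equiv.swap j j' x) = S₂ x := by
        intro x
        rcases eq_or_ne x j with rfl | hxj
        · rw [Equiv.swap_apply_left]; exact hcls.symm
        · rcases eq_or_ne x j' with rfl | hxj'
          · rw [Equiv.swap_apply_right]; exact hcls
          · rw [Equiv.swap_apply_of_ne_of_ne hxj hxj']
      have hπ' : ∀ x, S₁ ((π * Equiv.swap j j') x) = S₂ x := by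
        intro x
        simp only [Equiv.Perm.mul_apply]
        rw [hπ (Equiv.swap j j' x), hS2τ x]
      have hcard : (Inv S₂ (π * Equiv.swap j j')).card < (Inv S₂ π).card :=
        inv_swap_lt S₂ π hjj hcls hv hadj
      have h1 : L2cost n σ ≤ L2cost n (π * Equiv.swap j j') :=
        ih (π * Equiv.swap j j') (by omega) hπ'
      exact h1.trans (cost_swap π hjj hv)

end Stmt11

/-- optimal rearrangement structure, Lemma 3.1 of Amir et al.: for binary
strings `S₁, S₂` of length `n` with equal numbers of ones, the order-preserving matching
`σ` (a valid rearrangement that maps the k-th one of `S₂` to the k-th one of `S₁`, and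
k-th zero to k-th zero, i.e. is monotone on each value class) minimizes `Σ_j |j - π(j)|²`
over all valid rearrangement permutations `π`. -/
theorem stmt11 (n : ℕ) (S₁ S₂ : Fin n → Fin 2)
    (hones : (Finset.univ.filter fun j => S₁ j = 1).card =
      (Finset.univ.filter fun j => S₂ j = 1).card)
    (σ : Equiv.Perm (Fin n)) (hσ : ∀ j, S₁ (σ j) = S₂ j)
    (hmono : ∀ j j', S₂ j = S₂ j' → j ≤ j' → σ j ≤ σ j')
    (π : Equiv.Perm (Fin n)) (hπ : ∀ j, S₁ (π j) = S₂ j) :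
    L2cost n σ ≤ L2cost n π := by
  exact Stmt11.key S₁ S₂ σ hσ hmono (Stmt11.Inv S₂ π).card π le_rfl hπ
end
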